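/- The quantile function Q_μ of a probability measure μ on ℝ is continuous on (0,1) if and only if the support of μ is an interval (convex). -/

import Mathlib

open MeasureTheory Set

noncomputable def Rplus (μ : Measure ℝ) (x : ℝ) : ℝ := (μ (Iic x)).toReal

noncomputable def Quant (μ : Measure ℝ) (s : ℝ) : ℝ := sInf {x : ℝ | s ≤ Rplus μ x}

/-- The support of a measure: points all of whose open neighborhoods have
positive measure. -/
def msupport (μ : Measure ℝ) : Set ℝ :=
  {x | ∀ U : Set ℝ, IsOpen U → x ∈ U → 0 < μ U}

open ProbabilityTheory Filter Topology

set_option linter.unusedSectionVars false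

section Helpers

variable (μ : Measure ℝ) [IsProbabilityMeasure μ]

lemma Rplus_eq_cdf : Rplus μ = cdf μ := funext fun x => (cdf_eq_real μ x).symm

lemma Rplus_mono : Monotone (Rplus μ) := by
  rw [Rplus_eq_cdf]; exact monotone_cdf μ

lemma Rplus_nonneg (x : ℝ) : 0 ≤ Rplus μ x := ENNReal.toReal_nonneg

lemma measure_Ioc_eq (a b : ℝ) :
    μ (Ioc a b) = ENNReal.ofReal (Rplus μ b - Rplus μ a) := by
  conv_lhs => rw [← measure_cdf μ]
  rw [StieltjesFunction.measure_Ioc, Rplus_eq_cdf]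

lemma msupport_compl_null : μ (msupport μ)ᶜ = 0 := by
  apply measure_null_of_locally_null
  intro x hx
  simp only [msupport, mem_compl_iff, mem_setOf_eq, not_forall] at hx
  obtain ⟨U, hU, hxU, hU0⟩ := hx
  exact ⟨U, mem_nhdsWithin_of_mem_nhds (hU.mem_nhds hxU),
    le_antisymm (not_lt.mp hU0) (zero_le)⟩

lemma exists_supp_le {c : ℝ} (h : 0 < μ (Iic c)) : ∃ a ∈ msupport μ, a ≤ c := by
  by_contra hc
  push_neg at hc
  have : Iic c ⊆ (msupport μ)ᶜ := fun x hx hxs => absurd hx (not_le.mpr (hc x hxs))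
  exact absurd (measure_mono_null this (msupport_compl_null μ)) h.ne'

lemma exists_supp_gt {c : ℝ} (h : 0 < μ (Ioi c)) : ∃ b ∈ msupport μ, c < b := by
  by_contra hc
  push_neg at hc
  have : Ioi c ⊆ (msupport μ)ᶜ := fun x hx hxs => absurd hx (not_lt.mpr (hc x hxs))
  exact absurd (measure_mono_null this (msupport_compl_null μ)) h.ne'

lemma S_nonempty {s : ℝ} (hs : s < 1) : ∃ x, x ∈ {x : ℝ | s ≤ Rplus μ x} := by
  have := (tendsto_cdf_atTop μ).eventually (eventually_ge_nhds hs)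
  obtain ⟨x, hx⟩ := this.exists
  exact ⟨x, by simpa [Rplus_eq_cdf] using hx⟩

lemma S_bddBelow {s : ℝ} (hs : 0 < s) : BddBelow {x : ℝ | s ≤ Rplus μ x} := by
  have := (tendsto_cdf_atBot μ).eventually (eventually_lt_nhds hs)
  obtain ⟨M, hM⟩ := this.exists_forall_of_atBot
  refine ⟨M, fun x hx => ?_⟩
  simp only [mem_setOf_eq, Rplus_eq_cdf] at hx
  by_contra hxM
  exact absurd hx (not_le.mpr (hM x (not_le.mp hxM).le))

lemma Quant_le {s x : ℝ} (hs : 0 < s) (hx : s ≤ Rplus μ x) : Quant μ s ≤ x :=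
  csInf_le (S_bddBelow μ hs) hx

lemma le_Quant {s x : ℝ} (h1 : s < 1) (h : ∀ y, s ≤ Rplus μ y → x ≤ y) :
    x ≤ Quant μ s :=
  le_csInf (S_nonempty μ h1) h

lemma Quant_lt_imp {s x : ℝ} (h1 : s < 1) (h : Quant μ s < x) : s ≤ Rplus μ x := by
  obtain ⟨y, hy, hyx⟩ := exists_lt_of_csInf_lt (S_nonempty μ h1) h
  exact hy.trans (Rplus_mono μ hyx.le)

lemma Rplus_Quant_ge {s : ℝ} (h0 : 0 < s) (h1 : s < 1) : s ≤ Rplus μ (Quant μ s) := by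
  set q := Quant μ s
  have hrc : Tendsto (Rplus μ) (𝓝[>] q) (𝓝 (Rplus μ q)) := by
    rw [Rplus_eq_cdf]
    exact ((cdf μ).right_continuous q).mono Ioi_subset_Ici_self
  refine ge_of_tendsto hrc ?_
  filter_upwards [self_mem_nhdsWithin] with x hx
  exact Quant_lt_imp μ h1 hx

lemma Quant_mono {s t : ℝ} (h0 : 0 < s) (hst : s ≤ t) (h1 : t < 1) :
    Quant μ s ≤ Quant μ t :=
  csInf_le_csInf (S_bddBelow μ h0) (S_nonempty μ h1)
    (fun x hx => le_trans hst hx)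

lemma measure_Iic_pos {c : ℝ} (h : 0 < Rplus μ c) : 0 < μ (Iic c) := by
  rw [pos_iff_ne_zero]
  intro h0
  rw [Rplus, h0] at h
  simp at h

lemma measure_Ioi_pos {c : ℝ} (h : Rplus μ c < 1) : 0 < μ (Ioi c) := by
  rw [pos_iff_ne_zero]
  intro h0
  have hsum := measure_add_measure_compl (μ := μ) (measurableSet_Iic (a := c))
  rw [compl_Iic, h0, add_zero, measure_univ] at hsum
  rw [Rplus, hsum] at h
  simp at h

lemma Rplus_eq_of_null {x y : ℝ} (hxy : x ≤ y) (h : μ (Ioc x y) = 0) :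
    Rplus μ y = Rplus μ x := by
  have h1 := measure_Ioc_eq μ x y
  rw [h, eq_comm, ENNReal.ofReal_eq_zero] at h1
  have h2 := Rplus_mono μ hxy
  linarith

lemma toReal_Iic_add_toReal_Ioi (c : ℝ) :
    (μ (Iic c)).toReal + (μ (Ioi c)).toReal = 1 := by
  have hsum := measure_add_measure_compl (μ := μ) (measurableSet_Iic (a := c))
  rw [compl_Iic, measure_univ] at hsum
  rw [← ENNReal.toReal_add (measure_ne_top μ _) (measure_ne_top μ _), hsum, ENNReal.toReal_one]

theorem quantile_continuous_iff_support_convex' :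
    ContinuousOn (Quant μ) (Ioo (0 : ℝ) 1) ↔ Convex ℝ (msupport μ) := by
  constructor
  · intro hcont
    rw [convex_iff_ordConnected]
    constructor
    intro a ha b hb c hc
    by_contra hc'
    have hac : a < c := lt_of_le_of_ne hc.1 (fun h => hc' (h ▸ ha))
    have hcb : c < b := lt_of_le_of_ne hc.2 (fun h => hc' (h ▸ hb))
    obtain ⟨U, hUopen, hcU, hU0⟩ : ∃ U : Set ℝ, IsOpen U ∧ c ∈ U ∧ μ U = 0 := by
      simp only [msupport, mem_setOf_eq, not_forall] at hc'
      obtain ⟨U, h1, h2, h3⟩ := hc'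
      exact ⟨U, h1, h2, le_antisymm (not_lt.mp h3) (zero_le)⟩
    obtain ⟨δ, hδ, hball⟩ := Metric.isOpen_iff.mp hUopen c hcU
    rw [Real.ball_eq_Ioo] at hball
    have hIoo : μ (Ioo (c - δ) (c + δ)) = 0 := measure_mono_null hball hU0
    set s := Rplus μ c with hsdef
    have hs0 : 0 < s := by
      have h1 : 0 < μ (Ioo (a - 1) c) := ha _ isOpen_Ioo ⟨by linarith, hac⟩
      have h2 : μ (Ioo (a - 1) c) ≤ μ (Iic c) := measure_mono (fun x hx => hx.2.le)
      rw [hsdef, Rplus]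
      exact ENNReal.toReal_pos (h1.trans_le h2).ne' (measure_ne_top μ _)
    have hs1 : s < 1 := by
      have h1 : 0 < μ (Ioo c (b + 1)) := hb _ isOpen_Ioo ⟨hcb, by linarith⟩
      have h2 : μ (Ioo c (b + 1)) ≤ μ (Ioi c) := measure_mono (fun x hx => hx.1)
      have h3 : 0 < (μ (Ioi c)).toReal :=
        ENNReal.toReal_pos (h1.trans_le h2).ne' (measure_ne_top μ _)
      have h4 := toReal_Iic_add_toReal_Ioi μ c
      rw [hsdef, Rplus]
      linarith
    have hF1 : Rplus μ (c - δ / 2) = s :=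
      (Rplus_eq_of_null μ (by linarith) (measure_mono_null
        (show Ioc (c - δ / 2) c ⊆ Ioo (c - δ) (c + δ) from
          fun x hx => ⟨by linarith [hx.1], by linarith [hx.2]⟩) hIoo)).symm
    have hF2 : Rplus μ (c + δ / 2) = s :=
      Rplus_eq_of_null μ (by linarith) (measure_mono_null
        (show Ioc c (c + δ / 2) ⊆ Ioo (c - δ) (c + δ) from
          fun x hx => ⟨by linarith [hx.1], by linarith [hx.2]⟩) hIoo)
    have hQs : Quant μ s ≤ c - δ / 2 := Quant_le μ hs0 (le_of_eq hF1.symm)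
    have hQt : ∀ t, s < t → t < 1 → c + δ / 2 ≤ Quant μ t := by
      intro t hst ht1
      refine le_Quant μ ht1 (fun y hy => ?_)
      by_contra hyc
      push_neg at hyc
      have hle : Rplus μ y ≤ s := hF2 ▸ Rplus_mono μ hyc.le
      linarith
    have hcw : Tendsto (Quant μ) (𝓝[Ioo (0:ℝ) 1] s) (𝓝 (Quant μ s)) :=
      hcont s ⟨hs0, hs1⟩
    have htd : Tendsto (Quant μ) (𝓝[>] s) (𝓝 (Quant μ s)) := by
      refine hcw.mono_left ?_
      calc 𝓝[>] s = 𝓝[Ioo s 1] s := (nhdsWithin_Ioo_eq_nhdsGT hs1).symm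
        _ ≤ 𝓝[Ioo (0:ℝ) 1] s := nhdsWithin_mono _ (fun x hx => ⟨hs0.trans hx.1, hx.2⟩)
    have hev : ∀ᶠ t in 𝓝[>] s, c + δ / 2 ≤ Quant μ t := by
      filter_upwards [self_mem_nhdsWithin,
        eventually_nhdsWithin_of_eventually_nhds (eventually_lt_nhds hs1)] with t h1 h2
      exact hQt t h1 h2
    have := ge_of_tendsto htd hev
    linarith
  · intro hconv
    have hOC := hconv.ordConnected
    intro s hs
    obtain ⟨hs0, hs1⟩ := hs
    rw [Metric.continuousWithinAt_iff]
    intro ε hε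
    have hleft : ∃ t₁, 0 < t₁ ∧ t₁ < s ∧ Quant μ s - ε < Quant μ t₁ := by
      by_contra h
      push_neg at h
      have key : ∀ t, 0 < t → t < s → t ≤ Rplus μ (Quant μ s - ε) := fun t ht0 hts =>
        le_trans (Rplus_Quant_ge μ ht0 (hts.trans hs1)) (Rplus_mono μ (h t ht0 hts))
      have hF : s ≤ Rplus μ (Quant μ s - ε) := by
        by_contra hF
        push_neg at hF
        have hnn := Rplus_nonneg μ (Quant μ s - ε)
        have := key ((Rplus μ (Quant μ s - ε) + s) / 2) (by linarith) (by linarith)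
        linarith
      have := Quant_le μ hs0 hF
      linarith
    have hright : ∃ t₂, s < t₂ ∧ t₂ < 1 ∧ Quant μ t₂ < Quant μ s + ε := by
      by_contra h
      push_neg at h
      set q := Quant μ s with hq
      have hconst : ∀ x, q < x → x < q + ε → Rplus μ x = s := by
        intro x hqx hxe
        have hge : s ≤ Rplus μ x := Quant_lt_imp μ hs1 hqx
        refine le_antisymm ?_ hge
        by_contra hgt
        push_neg at hgt
        have hts : s < min ((s + Rplus μ x) / 2) ((s + 1) / 2) :=
          lt_min (by linarith) (by linarith)
        have ht1 : min ((s + Rplus μ x) / 2) ((s + 1) / 2) < 1 :=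
          (min_le_right _ _).trans_lt (by linarith)
        have htF : min ((s + Rplus μ x) / 2) ((s + 1) / 2) ≤ Rplus μ x :=
          (min_le_left _ _).trans (by linarith)
        have h1 := Quant_le μ (hs0.trans hts) htF
        have h2 := h _ hts ht1
        linarith
      have hnull : μ (Ioc (q + ε / 4) (q + ε * 3 / 4)) = 0 := by
        rw [measure_Ioc_eq, hconst _ (by linarith) (by linarith),
          hconst _ (by linarith) (by linarith)]
        simp
      have hc' : (q + ε / 2) ∉ msupport μ := by
        intro hmem
        have hpos := hmem (Ioo (q + ε / 4) (q + ε * 3 / 4)) isOpen_Ioo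
          ⟨by linarith, by linarith⟩
        exact absurd (measure_mono_null Ioo_subset_Ioc_self hnull) hpos.ne'
      have hFc : Rplus μ (q + ε / 2) = s := hconst _ (by linarith) (by linarith)
      obtain ⟨a, haS, hac⟩ := exists_supp_le μ (measure_Iic_pos μ (by rw [hFc]; exact hs0))
      obtain ⟨b, hbS, hcb⟩ := exists_supp_gt μ (measure_Ioi_pos μ (by rw [hFc]; exact hs1))
      exact hc' (hOC.out haS hbS ⟨hac, hcb.le⟩)
    obtain ⟨t₁, ht₁0, ht₁s, ht₁Q⟩ := hleft
    obtain ⟨t₂, ht₂s, ht₂1, ht₂Q⟩ := hright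
    refine ⟨min (s - t₁) (t₂ - s), lt_min (by linarith) (by linarith), ?_⟩
    intro t ht hdist
    rw [Real.dist_eq] at hdist
    rw [Real.dist_eq]
    have hm1 := min_le_left (s - t₁) (t₂ - s)
    have hm2 := min_le_right (s - t₁) (t₂ - s)
    have ha1 := (abs_lt.mp hdist).1
    have ha2 := (abs_lt.mp hdist).2
    have hQl : Quant μ t₁ ≤ Quant μ t := Quant_mono μ ht₁0 (by linarith) ht.2
    have hQr : Quant μ t ≤ Quant μ t₂ := Quant_mono μ ht.1 (by linarith) ht₂1
    rw [abs_lt]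
    constructor <;> linarith


end Helpers

/-- `Q_μ` is continuous on `(0,1)` iff the support of `μ` is convex. -/
theorem quantile_continuous_iff_support_convex (μ : Measure ℝ)
    [IsProbabilityMeasure μ] :
    ContinuousOn (Quant μ) (Ioo (0 : ℝ) 1) ↔ Convex ℝ (msupport μ) := by
  exact quantile_continuous_iff_support_convex' μ
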